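/- Let q = p^e > 2 be a prime power, r ≥ 1 a divisor of 2e, λ ∈ F* with λ^{p^{tr}} = λ^q for some 0 ≤ t < 2e/r, k = k_{r,λ}(q), and η ∈ F*. A flag (⟨u₂⟩, L₂) ∈ V(q) is adjacent to (0, N(η)) in Γ_{r,λ}(q) if and only if there exist an integer 0 ≤ i < k, f ∈ F \ {1}, g ∈ F and h ∈ F* with η^q g + η g^q = f^{q+1}, such that (i) u₂ is a scalar multiple of (fh/(1−f), ηh/(1−f), gh/(1−f)), and (ii) L₂ is the set of absolute points ⟨x,y,z⟩ satisfying (λ^{q p^{ir}} η^q + f^q h)x − (λ^{q p^{ir}} η^{q−1} f + g^q h)y − η^q h z = 0. -/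

import Mathlib

namespace UnitaryGraphPaper

variable (F : Type) [Field F]

/-- The Hermitian form β((x₁,y₁,z₁),(x₂,y₂,z₂)) = −x₁x₂^q + y₁z₂^q + z₁y₂^q. -/
def beta (q : ℕ) (u v : F × F × F) : F :=
  -(u.1 * v.1 ^ q) + u.2.1 * v.2.2 ^ q + u.2.2 * v.2.1 ^ q

/-- A vector is isotropic if β(u,u) = 0. -/
def Isotropic (q : ℕ) (u : F × F × F) : Prop := beta F q u u = 0

/-- Absolute points: 1-dimensional subspaces spanned by nonzero isotropic vectors. -/
def IsAbsolutePoint (q : ℕ) (P : Submodule F (F × F × F)) : Prop :=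
  ∃ u : F × F × F, u ≠ 0 ∧ Isotropic F q u ∧ P = Submodule.span F {u}

/-- Lines of the Hermitian unital: sets of absolute points contained in a 2-dimensional
subspace spanned by two linearly independent isotropic vectors. -/
def IsUnitalLine (q : ℕ) (l : Set (Submodule F (F × F × F))) : Prop :=
  ∃ u v : F × F × F, Isotropic F q u ∧ Isotropic F q v ∧ LinearIndependent F ![u, v] ∧
    l = {P | IsAbsolutePoint F q P ∧ P ≤ Submodule.span F ({u, v} : Set (F × F × F))}

/-- Flags of the Hermitian unital: incident point-line pairs. -/
def Flag (q : ℕ) : Type :=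
  {Pl : Submodule F (F × F × F) × Set (Submodule F (F × F × F)) //
    IsAbsolutePoint F q Pl.1 ∧ IsUnitalLine F q Pl.2 ∧ Pl.1 ∈ Pl.2}

/-- The set of absolute points ⟨x,y,z⟩ for which the determinant of the 3×3 matrix with
columns (x,y,z), u, w vanishes. -/
def detLine (q : ℕ) (u w : F × F × F) : Set (Submodule F (F × F × F)) :=
  {P | ∃ v : F × F × F, v ≠ 0 ∧ Isotropic F q v ∧ P = Submodule.span F {v} ∧
    (!![v.1, u.1, w.1; v.2.1, u.2.1, w.2.1; v.2.2, u.2.2, w.2.2] : Matrix (Fin 3) (Fin 3) F).det = 0}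

/-- The defining adjacency condition of the unitary graph Γ_{r,λ}(q), q = p^e. -/
def AdjCond (p q e r : ℕ) (lam : F) (v₁ v₂ : Flag F q) : Prop :=
  ∃ i : ℕ, i < 2 * e / r ∧ ∃ u₁ u₂ u₀ : F × F × F,
    u₁ ≠ 0 ∧ Isotropic F q u₁ ∧ v₁.1.1 = Submodule.span F {u₁} ∧
    u₂ ≠ 0 ∧ Isotropic F q u₂ ∧ v₂.1.1 = Submodule.span F {u₂} ∧
    ¬ Isotropic F q u₀ ∧ beta F q u₀ u₁ = 0 ∧ beta F q u₀ u₂ = 0 ∧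
    v₁.1.2 = detLine F q u₁ (u₀ + u₂) ∧
    v₂.1.2 = detLine F q u₂ (u₀ + lam ^ (q * p ^ (i * r)) • u₁)

/-- The unitary graph Γ_{r,λ}(q). -/
def unitaryGraph (p q e r : ℕ) (lam : F) : SimpleGraph (Flag F q) :=
  SimpleGraph.fromRel (AdjCond F p q e r lam)

/-- The absolute point ∞ = ⟨0,1,0⟩. -/
def ptInfty : Submodule F (F × F × F) := Submodule.span F {((0 : F), 1, 0)}

/-- The absolute point 0 = ⟨0,0,1⟩. -/
def ptZero : Submodule F (F × F × F) := Submodule.span F {((0 : F), 0, 1)}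

/-- The line L*: absolute points ⟨x,y,z⟩ with x = 0. -/
def lineLstar (q : ℕ) : Set (Submodule F (F × F × F)) :=
  {P | ∃ v : F × F × F, v ≠ 0 ∧ Isotropic F q v ∧ P = Submodule.span F {v} ∧ v.1 = 0}

/-- The line L: absolute points ⟨x,y,z⟩ with x = z. -/
def lineL (q : ℕ) : Set (Submodule F (F × F × F)) :=
  {P | ∃ v : F × F × F, v ≠ 0 ∧ Isotropic F q v ∧ P = Submodule.span F {v} ∧ v.1 = v.2.2}

/-- The line N(η): absolute points ⟨x,y,z⟩ with y = ηx. -/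
def lineN (q : ℕ) (eta : F) : Set (Submodule F (F × F × F)) :=
  {P | ∃ v : F × F × F, v ≠ 0 ∧ Isotropic F q v ∧ P = Submodule.span F {v} ∧ v.2.1 = eta * v.1}

/-- The line given by the homogenous equation A x + B y + C z = 0 (as a set of absolute
points). -/
def eqnLine (q : ℕ) (A B C : F) : Set (Submodule F (F × F × F)) :=
  {P | ∃ v : F × F × F, v ≠ 0 ∧ Isotropic F q v ∧ P = Submodule.span F {v} ∧
    A * v.1 + B * v.2.1 + C * v.2.2 = 0}

/-- Common neighbours of two vertices in a graph. -/
def commonNbrs {V : Type} (G : SimpleGraph V) (a b : V) : Set V :=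
  {c | G.Adj a c ∧ G.Adj b c}

lemma det3_eq (v u w : F × F × F) :
    (!![v.1, u.1, w.1; v.2.1, u.2.1, w.2.1; v.2.2, u.2.2, w.2.2] : Matrix (Fin 3) (Fin 3) F).det
      = v.1*u.2.1*w.2.2 - v.1*w.2.1*u.2.2 - u.1*v.2.1*w.2.2 + u.1*w.2.1*v.2.2
        + w.1*v.2.1*u.2.2 - w.1*u.2.1*v.2.2 := by
  simp [Matrix.det_fin_three]

lemma sets_eq (q : ℕ) (P₁ P₂ : (F × F × F) → Prop)
    (h : ∀ v : F × F × F, v ≠ 0 → Isotropic F q v → (P₁ v ↔ P₂ v)) :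
    {P : Submodule F (F × F × F) | ∃ v : F × F × F, v ≠ 0 ∧ Isotropic F q v ∧
        P = Submodule.span F {v} ∧ P₁ v} =
    {P : Submodule F (F × F × F) | ∃ v : F × F × F, v ≠ 0 ∧ Isotropic F q v ∧
        P = Submodule.span F {v} ∧ P₂ v} := by
  ext P
  constructor <;> rintro ⟨v, h1, h2, h3, h4⟩
  · exact ⟨v, h1, h2, h3, (h v h1 h2).mp h4⟩
  · exact ⟨v, h1, h2, h3, (h v h1 h2).mpr h4⟩

lemma iso_smul (q : ℕ) (t : F) (v : F × F × F) (h : Isotropic F q v) :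
    Isotropic F q (t • v) := by
  unfold Isotropic beta at *
  simp only [Prod.smul_fst, Prod.smul_snd, smul_eq_mul, mul_pow]
  linear_combination (t * t ^ q) * h

lemma mem_line_iff (q : ℕ) (P₁ : (F × F × F) → Prop) (v₀ : F × F × F)
    (h0 : v₀ ≠ 0) (hiso : Isotropic F q v₀) :
    (Submodule.span F {v₀} ∈ {P : Submodule F (F × F × F) | ∃ v : F × F × F, v ≠ 0 ∧
        Isotropic F q v ∧ P = Submodule.span F {v} ∧ P₁ v}) ↔
      ∃ t : F, t ≠ 0 ∧ P₁ (t • v₀) := by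
  constructor
  · rintro ⟨v, h1, h2, h3, h4⟩
    have hv : v ∈ Submodule.span F {v₀} := by
      rw [h3]; exact Submodule.mem_span_singleton_self v
    obtain ⟨t, ht⟩ := Submodule.mem_span_singleton.mp hv
    refine ⟨t, ?_, ?_⟩
    · rintro rfl; rw [zero_smul] at ht; exact h1 ht.symm
    · rw [ht]; exact h4
  · rintro ⟨t, ht, hP⟩
    refine ⟨t • v₀, smul_ne_zero ht h0, iso_smul F q t v₀ hiso, ?_, hP⟩
    exact (Submodule.span_singleton_smul_eq (isUnit_iff_ne_zero.mpr ht) v₀).symm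

lemma mem_detLine_iff (q : ℕ) (u w v₀ : F × F × F) (h0 : v₀ ≠ 0) (hiso : Isotropic F q v₀) :
    (Submodule.span F {v₀} ∈ detLine F q u w) ↔
      ∃ t : F, t ≠ 0 ∧
        (!![(t • v₀).1, u.1, w.1; (t • v₀).2.1, u.2.1, w.2.1;
            (t • v₀).2.2, u.2.2, w.2.2] : Matrix (Fin 3) (Fin 3) F).det = 0 :=
  mem_line_iff F q _ v₀ h0 hiso

lemma mem_lineN_iff (q : ℕ) (eta : F) (v₀ : F × F × F) (h0 : v₀ ≠ 0)
    (hiso : Isotropic F q v₀) :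
    (Submodule.span F {v₀} ∈ lineN F q eta) ↔
      ∃ t : F, t ≠ 0 ∧ (t • v₀).2.1 = eta * (t • v₀).1 :=
  mem_line_iff F q _ v₀ h0 hiso

lemma detLine_eq_eqnLine (q : ℕ) (u w : F × F × F) (A B C τ₁ τ₂ : F)
    (h₁ : τ₁ ≠ 0) (h₂ : τ₂ ≠ 0)
    (key : ∀ v : F × F × F,
      τ₁ * (v.1*u.2.1*w.2.2 - v.1*w.2.1*u.2.2 - u.1*v.2.1*w.2.2 + u.1*w.2.1*v.2.2
        + w.1*v.2.1*u.2.2 - w.1*u.2.1*v.2.2) = τ₂ * (A*v.1 + B*v.2.1 + C*v.2.2)) :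
    detLine F q u w = eqnLine F q A B C := by
  apply sets_eq
  intro v _ _
  rw [det3_eq]
  constructor
  · intro hd
    have hk := key v
    rw [hd, mul_zero] at hk
    exact (mul_eq_zero.mp hk.symm).resolve_left h₂
  · intro hd
    have hk := key v
    rw [hd, mul_zero] at hk
    exact (mul_eq_zero.mp hk).resolve_left h₁

lemma lineN_eq_detLine (q : ℕ) (eta : F) (u w : F × F × F) (τ : F) (hτ : τ ≠ 0)
    (key : ∀ v : F × F × F,
      v.1*u.2.1*w.2.2 - v.1*w.2.1*u.2.2 - u.1*v.2.1*w.2.2 + u.1*w.2.1*v.2.2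
        + w.1*v.2.1*u.2.2 - w.1*u.2.1*v.2.2 = τ * (v.2.1 - eta * v.1)) :
    lineN F q eta = detLine F q u w := by
  apply sets_eq
  intro v _ _
  rw [det3_eq, key v]
  constructor
  · intro h; rw [h]; simp
  · intro h
    have := (mul_eq_zero.mp h).resolve_left hτ
    have := sub_eq_zero.mp this
    exact this

lemma lineN_detLine_extract (q : ℕ) (hq0 : q ≠ 0) (eta c W₁ W₂ W₃ zt : F)
    (heta : eta ≠ 0) (hc : c ≠ 0) (hz : eta * zt ^ q + zt * eta ^ q = 1)
    (hl : lineN F q eta = detLine F q ((0:F),(0:F),c) (W₁, W₂, W₃)) :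
    W₁ ≠ 0 ∧ W₂ = eta * W₁ := by
  have h010 : (((0:F),(1:F),(0:F)) : F × F × F) ≠ 0 := by simp [Prod.ext_iff]
  have h010iso : Isotropic F q ((0:F),(1:F),(0:F)) := by
    simp [Isotropic, beta, zero_pow hq0]
  have hv0 : (((1:F), eta, zt) : F × F × F) ≠ 0 := by simp [Prod.ext_iff]
  have hviso : Isotropic F q ((1:F), eta, zt) := by
    simp only [Isotropic, beta, one_pow]
    linear_combination hz
  have hW1 : W₁ ≠ 0 := by
    intro hW1
    have hmem : Submodule.span F {(((0:F),(1:F),(0:F)) : F × F × F)}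
        ∈ detLine F q ((0:F),(0:F),c) (W₁,W₂,W₃) := by
      refine (mem_detLine_iff F q _ _ _ h010 h010iso).mpr ⟨1, one_ne_zero, ?_⟩
      rw [det3_eq]
      simp [hW1]
    rw [← hl] at hmem
    obtain ⟨t, ht, hP⟩ := (mem_lineN_iff F q eta _ h010 h010iso).mp hmem
    simp [Prod.smul_mk, smul_eq_mul] at hP
    exact ht hP
  refine ⟨hW1, ?_⟩
  have hmem : Submodule.span F {(((1:F), eta, zt) : F × F × F)} ∈ lineN F q eta := by
    refine (mem_lineN_iff F q eta _ hv0 hviso).mpr ⟨1, one_ne_zero, ?_⟩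
    simp
  rw [hl] at hmem
  obtain ⟨t, ht, hdet⟩ := (mem_detLine_iff F q _ _ _ hv0 hviso).mp hmem
  rw [det3_eq] at hdet
  simp only [Prod.smul_mk, smul_eq_mul] at hdet
  have h2 : t * c * (eta * W₁ - W₂) = 0 := by linear_combination hdet
  have h3 := (mul_eq_zero.mp h2).resolve_left (mul_ne_zero ht hc)
  exact (sub_eq_zero.mp h3).symm

lemma charP_of_card (p q e : ℕ) (hp : p.Prime) (he : 0 < e) (hq : q = p ^ e)
    [Fintype F] (hF : Fintype.card F = q ^ 2) : CharP F p := by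
  haveI : CharP F (ringChar F) := ringChar.charP F
  have hcp : (ringChar F).Prime := CharP.char_is_prime F (ringChar F)
  obtain ⟨n, -, hcard⟩ := FiniteField.card F (ringChar F)
  have hpe : p ^ (e * 2) = (ringChar F) ^ (n : ℕ) := by
    rw [pow_mul, ← hq, ← hF, hcard]
  have hdvd : p ∣ (ringChar F) ^ (n : ℕ) := by
    rw [← hpe]; exact dvd_pow_self p (by positivity)
  have : p = ringChar F := (Nat.prime_dvd_prime_iff_eq hp hcp).mp (hp.dvd_of_dvd_pow hdvd)
  rw [this]; infer_instance

lemma exists_ne_pow (p q e : ℕ) (hp : p.Prime) (he : 0 < e) (hq : q = p ^ e) (hq2 : 2 < q)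
    [Fintype F] (hF : Fintype.card F = q ^ 2) : ∃ x : F, x ^ q ≠ x := by
  classical
  by_contra hall
  push_neg at hall
  set f : Polynomial F := Polynomial.X ^ q - Polynomial.X with hf
  have hdeg : f.natDegree = q := FiniteField.X_pow_card_sub_X_natDegree_eq F (by omega)
  have hf0 : f ≠ 0 := fun h0 => by simp [h0] at hdeg; omega
  have hsub : (Finset.univ : Finset F) ⊆ f.roots.toFinset := by
    intro x _
    rw [Multiset.mem_toFinset, Polynomial.mem_roots hf0]
    simp [hf, Polynomial.IsRoot, hall x]
  have h1 : Fintype.card F ≤ Multiset.card f.roots := by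
    calc Fintype.card F = (Finset.univ : Finset F).card := rfl
    _ ≤ f.roots.toFinset.card := Finset.card_le_card hsub
    _ ≤ Multiset.card f.roots := Multiset.toFinset_card_le _
  have h2 := f.card_roots'
  rw [hdeg] at h2
  rw [hF] at h1
  nlinarith [h1.trans h2]

lemma exists_trace_one (p q e : ℕ) (hp : p.Prime) (he : 0 < e) (hq : q = p ^ e) (hq2 : 2 < q)
    [Fintype F] (hF : Fintype.card F = q ^ 2) : ∃ w : F, w + w ^ q = 1 := by
  haveI : CharP F p := charP_of_card F p q e hp he hq hF
  haveI : Fact p.Prime := ⟨hp⟩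
  have hadd : ∀ x y : F, (x + y) ^ q = x ^ q + y ^ q := by
    intro x y; rw [hq]; exact add_pow_char_pow x y p e
  by_cases h2 : (2 : F) = 0
  · obtain ⟨x, hx⟩ := exists_ne_pow F p q e hp he hq hq2 hF
    set t : F := x + x ^ q with htdef
    have ht0 : t ≠ 0 := by
      intro h0
      apply hx
      have hxq : x ^ q = -x := by linear_combination h0
      rw [hxq]
      linear_combination -x * h2
    have hxq2 : (x ^ q) ^ q = x := by
      rw [← pow_mul, ← sq, ← hF]
      exact FiniteField.pow_card x
    have htq : t ^ q = t := by
      rw [htdef, hadd, hxq2, add_comm]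
    refine ⟨x / t, ?_⟩
    rw [div_pow, htq, ← add_div, htdef, div_self ht0]
  · refine ⟨(2 : F)⁻¹, ?_⟩
    have h2q : (2 : F) ^ q = 2 := by
      have h := hadd 1 1
      norm_num at h
      exact h
    rw [inv_pow, h2q]
    field_simp
    norm_num

lemma key1 (q : ℕ) (eta f g s a0 c0 D mu c mu' h' : F)
    (hD : D = c0 + mu * c)
    (hc0 : c0 * eta ^ q = a0 * f ^ q)
    (hh' : h' * (mu * c) = mu' * a0)
    (hE : eta ^ (q-1) * eta = eta ^ q)
    (hcond : eta ^ q * g + eta * g ^ q = f ^ (q+1)) :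
    ∀ v : F × F × F,
      (eta ^ q * h') * (v.1*(eta*s)*D - v.1*0*(g*s) - (f*s)*v.2.1*D + (f*s)*0*v.2.2
          + a0*v.2.1*(g*s) - a0*(eta*s)*v.2.2)
        = (a0 * s * eta) * ((mu'*eta^q + f^q*h')*v.1
            + (-(mu'*eta^(q-1)*f + g^q*h'))*v.2.1 + (-(eta^q*h'))*v.2.2) := by
  intro v
  linear_combination (s*eta*eta^q*h'*v.1 - s*f*eta^q*h'*v.2.1) * hD
    + (s*eta*h'*v.1 - s*f*h'*v.2.1) * hc0
    + (s*eta*eta^q*v.1 - s*f*eta^q*v.2.1) * hh'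
    + (s*a0*h'*v.2.1) * hcond
    + (s*a0*mu'*f*v.2.1) * hE

lemma key2 (q : ℕ) (eta f g s h mu D : F)
    (hD : D * eta ^ q = h * f ^ q + mu * eta ^ q)
    (hE : eta ^ (q-1) * eta = eta ^ q)
    (hcond : eta ^ q * g + eta * g ^ q = f ^ (q+1)) :
    ∀ v : F × F × F,
      eta ^ q * (v.1*(eta*s)*D - v.1*0*(g*s) - (f*s)*v.2.1*D + (f*s)*0*v.2.2
          + h*v.2.1*(g*s) - h*(eta*s)*v.2.2)
        = (eta * s) * ((mu*eta^q + f^q*h)*v.1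
            + (-(mu*eta^(q-1)*f + g^q*h))*v.2.1 + (-(eta^q*h))*v.2.2) := by
  intro v
  linear_combination (s*eta*v.1 - s*f*v.2.1) * hD
    + (s*h*v.2.1) * hcond
    + (s*mu*f*v.2.1) * hE

lemma cond_of_iso (q : ℕ) (eta f g s a b c : F) (hs : s ≠ 0)
    (hfa : f * s = a) (hea : eta * s = b) (hga : g * s = c)
    (hiso : -(a * a ^ q) + b * c ^ q + c * b ^ q = 0) :
    eta ^ q * g + eta * g ^ q = f ^ (q + 1) := by
  have hfq : f ^ q * s ^ q = a ^ q := by rw [← mul_pow, hfa]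
  have heq : eta ^ q * s ^ q = b ^ q := by rw [← mul_pow, hea]
  have hgq : g ^ q * s ^ q = c ^ q := by rw [← mul_pow, hga]
  have h5 : (eta ^ q * g + eta * g ^ q - f ^ (q + 1)) * s ^ (q + 1) = 0 := by
    linear_combination (eta ^ q * s ^ q) * hga + c * heq + (eta * s) * hgq + c ^ q * hea
      - (f * s) * hfq - a ^ q * hfa + hiso
  have h6 := (mul_eq_zero.mp h5).resolve_right (pow_ne_zero _ hs)
  linear_combination h6

lemma c0_lemma (q : ℕ) (eta f s a0 c0 a b : F) (hs : s ≠ 0)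
    (hfa : f * s = a) (hea : eta * s = b) (h : c0 * b ^ q = a0 * a ^ q) :
    c0 * eta ^ q = a0 * f ^ q := by
  have hfq : f ^ q * s ^ q = a ^ q := by rw [← mul_pow, hfa]
  have heq : eta ^ q * s ^ q = b ^ q := by rw [← mul_pow, hea]
  have h3 : (c0 * eta ^ q) * s ^ q = (a0 * f ^ q) * s ^ q := by
    linear_combination c0 * heq - a0 * hfq + h
  exact mul_right_cancel₀ (pow_ne_zero q hs) h3

lemma point_span (f g h s eta : F) (h1f : 1 - f ≠ 0) (hh0 : h ≠ 0) (hs : s ≠ 0) :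
    Submodule.span F {((f * s, eta * s, g * s) : F × F × F)} =
      Submodule.span F {((f * h / (1 - f), eta * h / (1 - f), g * h / (1 - f)) : F × F × F)} := by
  have htup : ((f * h / (1 - f), eta * h / (1 - f), g * h / (1 - f)) : F × F × F)
      = (h / ((1 - f) * s)) • (f * s, eta * s, g * s) := by
    simp only [Prod.smul_mk, smul_eq_mul, Prod.mk.injEq]
    refine ⟨?_, ?_, ?_⟩ <;> · field_simp
  rw [htup]
  exact (Submodule.span_singleton_smul_eq
    (isUnit_iff_ne_zero.mpr (div_ne_zero hh0 (mul_ne_zero h1f hs))) _).symm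

theorem stmt9 (F : Type) [Field F] [Fintype F] (p q e r : ℕ)
    (hp : p.Prime) (he : 0 < e) (hq : q = p ^ e) (hq2 : 2 < q)
    (hr : 0 < r) (hre : r ∣ 2 * e) (hF : Fintype.card F = q ^ 2)
    (lam : F) (hlam : lam ≠ 0)
    (hlamq : ∃ t : ℕ, t < 2 * e / r ∧ lam ^ p ^ (t * r) = lam ^ q)
    (k : ℕ) (hk : 0 < k) (hkfix : lam ^ p ^ (k * r) = lam)
    (hkmin : ∀ j : ℕ, 0 < j → lam ^ p ^ (j * r) = lam → k ≤ j)
    (eta : F) (heta : eta ≠ 0)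
    (vN w : Flag F q) (hvN : vN.1 = (ptZero F, lineN F q eta)) :
    (unitaryGraph F p q e r lam).Adj vN w ↔
      ∃ i < k, ∃ f g h : F, f ≠ 1 ∧ h ≠ 0 ∧ eta ^ q * g + eta * g ^ q = f ^ (q + 1) ∧
        w.1.1 = Submodule.span F {(f * h / (1 - f), eta * h / (1 - f), g * h / (1 - f))} ∧
        w.1.2 = eqnLine F q (lam ^ (q * p ^ (i * r)) * eta ^ q + f ^ q * h)
          (-(lam ^ (q * p ^ (i * r)) * eta ^ (q - 1) * f + g ^ q * h)) (-(eta ^ q * h)) := by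
  have hq0 : q ≠ 0 := by omega
  have hq1 : q - 1 + 1 = q := by omega
  have hE : eta ^ (q - 1) * eta = eta ^ q := by rw [← pow_succ, hq1]
  have hetaq : eta ^ q ≠ 0 := pow_ne_zero _ heta
  have hvN1 : vN.1.1 = ptZero F := by rw [hvN]
  have hvN2 : vN.1.2 = lineN F q eta := by rw [hvN]
  have h2e : 0 < 2 * e := by omega
  have hrle : r ≤ 2 * e := Nat.le_of_dvd h2e hre
  have hdiv : 2 * e / r * r = 2 * e := Nat.div_mul_cancel hre
  have hlamq2 : lam ^ p ^ (2 * e) = lam := by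
    have hpq : p ^ (2 * e) = q ^ 2 := by rw [hq, ← pow_mul]; ring_nf
    rw [hpq, ← hF]
    exact FiniteField.pow_card lam
  have hkle : k ≤ 2 * e / r := hkmin _ (Nat.div_pos hrle hr) (by rw [hdiv]; exact hlamq2)
  obtain ⟨wt, hwt⟩ := exists_trace_one F p q e hp he hq hq2 hF
  set zt : F := wt / eta ^ q with hztdef
  have hzt : eta * zt ^ q + zt * eta ^ q = 1 := by
    have hq2eq : (eta ^ q) ^ q = eta := by
      rw [← pow_mul, ← sq, ← hF]
      exact FiniteField.pow_card eta
    rw [hztdef, div_pow, hq2eq, mul_comm eta (wt ^ q / eta), div_mul_cancel₀ _ heta,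
      div_mul_cancel₀ _ hetaq]
    linear_combination hwt
  constructor
  · -- FORWARD
    intro hadj
    simp only [unitaryGraph, SimpleGraph.fromRel_adj] at hadj
    obtain ⟨hne, hcase⟩ := hadj
    rcases hcase with hA | hA
    · -- AdjCond vN w
      obtain ⟨i, hi2e, u₁, u₂, u₀, hu₁0, hu₁iso, hsp₁, hu₂0, hu₂iso, hsp₂,
        hu₀niso, hb01, hb02, hl1, hl2⟩ := hA
      obtain ⟨x1, y1, z1⟩ := u₁
      obtain ⟨a2, b2, c2⟩ := u₂
      obtain ⟨a0, b0, c0⟩ := u₀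
      rw [hvN1] at hsp₁
      have hmem1 : ((x1, y1, z1) : F × F × F) ∈ ptZero F := by
        rw [hsp₁]; exact Submodule.mem_span_singleton_self _
      simp only [ptZero] at hmem1
      obtain ⟨cc, hcc⟩ := Submodule.mem_span_singleton.mp hmem1
      simp only [Prod.smul_mk, smul_eq_mul, mul_zero, mul_one, Prod.mk.injEq] at hcc
      obtain ⟨hx1, hy1, hz1⟩ := hcc
      subst hx1; subst hy1; subst hz1
      have hcc0 : cc ≠ 0 := by rintro rfl; exact hu₁0 rfl
      simp only [beta, zero_pow hq0, mul_zero, mul_one, neg_zero, zero_add, add_zero] at hb01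
      have hb0 : b0 = 0 := by
        rcases mul_eq_zero.mp hb01 with hh | hh
        · exact hh
        · exact absurd hh (pow_ne_zero _ hcc0)
      subst hb0
      have ha0 : a0 ≠ 0 := by
        intro hz
        apply hu₀niso
        simp [Isotropic, beta, hz, zero_pow hq0]
      rw [hvN2] at hl1
      have hsum : ((a0, (0:F), c0) : F × F × F) + (a2, b2, c2) = (a0 + a2, b2, c0 + c2) := by
        simp
      rw [hsum] at hl1
      obtain ⟨hs0, hb2⟩ := lineN_detLine_extract F q hq0 eta cc (a0 + a2) b2 (c0 + c2) zt
        heta hcc0 hzt hl1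
      subst hb2
      set s : F := a0 + a2 with hsdef
      set f : F := a2 / s with hfdef
      set g : F := c2 / s with hgdef
      have hfs : f * s = a2 := div_mul_cancel₀ a2 hs0
      have hgs : g * s = c2 := div_mul_cancel₀ c2 hs0
      have hf1 : f ≠ 1 := by
        intro hfe
        apply ha0
        have h7 : a2 = s := by rw [← hfs, hfe, one_mul]
        rw [hsdef] at h7
        linear_combination -h7
      have h1f : (1 : F) - f ≠ 0 := sub_ne_zero.mpr (Ne.symm hf1)
      set mu : F := lam ^ (q * p ^ (i * r)) with hmudef
      have hmu : mu ≠ 0 := pow_ne_zero _ hlam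
      set mu' : F := lam ^ (q * p ^ (0 * r)) with hmu'def
      have hmu'0 : mu' ≠ 0 := pow_ne_zero _ hlam
      set h' : F := mu' * a0 / (mu * cc) with h'def
      have hmucc : mu * cc ≠ 0 := mul_ne_zero hmu hcc0
      have hh'0 : h' ≠ 0 := div_ne_zero (mul_ne_zero hmu'0 ha0) hmucc
      have hh' : h' * (mu * cc) = mu' * a0 := div_mul_cancel₀ _ hmucc
      have hcond : eta ^ q * g + eta * g ^ q = f ^ (q + 1) :=
        cond_of_iso F q eta f g s a2 (eta * s) c2 hs0 hfs rfl hgs hu₂iso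
      have horth : c0 * (eta * s) ^ q = a0 * a2 ^ q := by
        have h8 : -(a0 * a2 ^ q) + 0 * c2 ^ q + c0 * (eta * s) ^ q = 0 := hb02
        linear_combination h8
      have hc0 : c0 * eta ^ q = a0 * f ^ q :=
        c0_lemma F q eta f s a0 c0 a2 (eta * s) hs0 hfs rfl horth
      have htup2 : ((a2, eta * s, c2) : F × F × F) = (f * s, eta * s, g * s) := by
        rw [hfs, hgs]
      refine ⟨0, hk, f, g, h', hf1, hh'0, hcond, ?_, ?_⟩
      · rw [hsp₂, htup2]
        exact point_span F f g h' s eta h1f hh'0 hs0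
      · rw [hl2]
        have hWsum : ((a0, (0:F), c0) : F × F × F) + mu • ((0:F), (0:F), cc)
            = (a0, 0, c0 + mu * cc) := by
          simp
        rw [hWsum, htup2]
        exact detLine_eq_eqnLine F q (f * s, eta * s, g * s) (a0, 0, c0 + mu * cc)
          _ _ _ (eta ^ q * h') (a0 * s * eta)
          (mul_ne_zero hetaq hh'0) (mul_ne_zero (mul_ne_zero ha0 hs0) heta)
          (key1 F q eta f g s a0 c0 (c0 + mu * cc) mu cc mu' h' rfl hc0 hh' hE hcond)
    · -- AdjCond w vN
      obtain ⟨i, hi2e, u₁, u₂, u₀, hu₁0, hu₁iso, hsp₁, hu₂0, hu₂iso, hsp₂,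
        hu₀niso, hb01, hb02, hl1, hl2⟩ := hA
      obtain ⟨a1, b1, c1⟩ := u₁
      obtain ⟨x2, y2, z2⟩ := u₂
      obtain ⟨a0, b0, c0⟩ := u₀
      rw [hvN1] at hsp₂
      have hmem1 : ((x2, y2, z2) : F × F × F) ∈ ptZero F := by
        rw [hsp₂]; exact Submodule.mem_span_singleton_self _
      simp only [ptZero] at hmem1
      obtain ⟨cc, hcc⟩ := Submodule.mem_span_singleton.mp hmem1
      simp only [Prod.smul_mk, smul_eq_mul, mul_zero, mul_one, Prod.mk.injEq] at hcc
      obtain ⟨hx2, hy2, hz2⟩ := hcc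
      subst hx2; subst hy2; subst hz2
      have hcc0 : cc ≠ 0 := by rintro rfl; exact hu₂0 rfl
      simp only [beta, zero_pow hq0, mul_zero, mul_one, neg_zero, zero_add, add_zero] at hb02
      have hb0 : b0 = 0 := by
        rcases mul_eq_zero.mp hb02 with hh | hh
        · exact hh
        · exact absurd hh (pow_ne_zero _ hcc0)
      subst hb0
      have ha0 : a0 ≠ 0 := by
        intro hz
        apply hu₀niso
        simp [Isotropic, beta, hz, zero_pow hq0]
      rw [hvN2] at hl2
      set mu : F := lam ^ (q * p ^ (i * r)) with hmudef
      have hmu : mu ≠ 0 := pow_ne_zero _ hlam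
      have hWsum2 : ((a0, (0:F), c0) : F × F × F) + mu • (a1, b1, c1)
          = (a0 + mu * a1, mu * b1, c0 + mu * c1) := by
        simp
      rw [hWsum2] at hl2
      obtain ⟨hA0, hB⟩ := lineN_detLine_extract F q hq0 eta cc (a0 + mu * a1) (mu * b1)
        (c0 + mu * c1) zt heta hcc0 hzt hl2
      have hb1 : b1 ≠ 0 := by
        intro h0
        rw [h0, mul_zero] at hB
        exact hA0 ((mul_eq_zero.mp hB.symm).resolve_left heta)
      set s1 : F := b1 / eta with hs1def
      have hs10 : s1 ≠ 0 := div_ne_zero hb1 heta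
      set f : F := eta * a1 / b1 with hfdef
      set g : F := eta * c1 / b1 with hgdef
      have hfa : f * s1 = a1 := by
        rw [hfdef, hs1def]
        field_simp
      have hea : eta * s1 = b1 := by
        rw [hs1def]
        field_simp
      have hga : g * s1 = c1 := by
        rw [hgdef, hs1def]
        field_simp
      have hf1 : f ≠ 1 := by
        intro hfe
        have h7 : eta * a1 = b1 := by
          have := hfe
          rw [hfdef, div_eq_one_iff_eq hb1] at this
          exact this
        have h8 : eta * a0 = 0 := by linear_combination -hB - mu * h7
        exact (mul_ne_zero heta ha0) h8
      have h1f : (1 : F) - f ≠ 0 := sub_ne_zero.mpr (Ne.symm hf1)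
      set mu' : F := lam ^ (q * p ^ (0 * r)) with hmu'def
      have hmu'0 : mu' ≠ 0 := pow_ne_zero _ hlam
      set hH : F := mu' * a0 / cc with hHdef
      have hH0 : hH ≠ 0 := div_ne_zero (mul_ne_zero hmu'0 ha0) hcc0
      have hh' : hH * (1 * cc) = mu' * a0 := by
        rw [one_mul]
        exact div_mul_cancel₀ _ hcc0
      have hcond : eta ^ q * g + eta * g ^ q = f ^ (q + 1) :=
        cond_of_iso F q eta f g s1 a1 b1 c1 hs10 hfa hea hga hu₁iso
      have horth : c0 * b1 ^ q = a0 * a1 ^ q := by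
        have h8 : -(a0 * a1 ^ q) + 0 * c1 ^ q + c0 * b1 ^ q = 0 := hb01
        linear_combination h8
      have hc0 : c0 * eta ^ q = a0 * f ^ q :=
        c0_lemma F q eta f s1 a0 c0 a1 b1 hs10 hfa hea horth
      have htup1 : ((a1, b1, c1) : F × F × F) = (f * s1, eta * s1, g * s1) := by
        rw [hfa, hea, hga]
      refine ⟨0, hk, f, g, hH, hf1, hH0, hcond, ?_, ?_⟩
      · rw [hsp₁, htup1]
        exact point_span F f g hH s1 eta h1f hH0 hs10
      · rw [hl1]
        have hsum1 : ((a0, (0:F), c0) : F × F × F) + ((0:F), (0:F), cc) = (a0, 0, c0 + cc) := by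
          simp
        rw [hsum1, htup1]
        exact detLine_eq_eqnLine F q (f * s1, eta * s1, g * s1) (a0, 0, c0 + cc)
          _ _ _ (eta ^ q * hH) (a0 * s1 * eta)
          (mul_ne_zero hetaq hH0) (mul_ne_zero (mul_ne_zero ha0 hs10) heta)
          (key1 F q eta f g s1 a0 c0 (c0 + cc) 1 cc mu' hH (by ring) hc0 hh' hE hcond)
  · -- BACKWARD
    rintro ⟨i, hik, f, g, h, hf1, hh0, hcond, hpt, hline⟩
    have h1f : (1 : F) - f ≠ 0 := sub_ne_zero.mpr (Ne.symm hf1)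
    set s : F := h / (1 - f) with hsdef
    have hs0 : s ≠ 0 := div_ne_zero hh0 h1f
    set mu : F := lam ^ (q * p ^ (i * r)) with hmudef
    have hmu : mu ≠ 0 := pow_ne_zero _ hlam
    have htup : ((f * h / (1 - f), eta * h / (1 - f), g * h / (1 - f)) : F × F × F)
        = (f * s, eta * s, g * s) := by
      rw [hsdef]
      exact Prod.ext (mul_div_assoc f h (1-f)) (Prod.ext (mul_div_assoc eta h (1-f))
        (mul_div_assoc g h (1-f)))
    rw [htup] at hpt
    set c0v : F := h * f ^ q / eta ^ q with hc0def
    simp only [unitaryGraph, SimpleGraph.fromRel_adj]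
    refine ⟨?_, Or.inl ?_⟩
    · intro hEq
      have hww : w.1.1 = ptZero F := by rw [← hEq, hvN1]
      rw [hpt] at hww
      have hmem : ((f * s, eta * s, g * s) : F × F × F) ∈ ptZero F := by
        rw [← hww]; exact Submodule.mem_span_singleton_self _
      simp only [ptZero] at hmem
      obtain ⟨t, htv⟩ := Submodule.mem_span_singleton.mp hmem
      simp only [Prod.smul_mk, smul_eq_mul, mul_zero, mul_one, Prod.mk.injEq] at htv
      exact (mul_ne_zero heta hs0) htv.2.1.symm
    · refine ⟨i, lt_of_lt_of_le hik hkle, ((0:F), (0:F), (1:F)), (f * s, eta * s, g * s),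
        (h, 0, c0v), ?_, ?_, ?_, ?_, ?_, ?_, ?_, ?_, ?_, ?_, ?_⟩
      · simp [Prod.ext_iff]
      · simp [Isotropic, beta, zero_pow hq0]
      · rw [hvN1]; rfl
      · intro h0
        have h9 : eta * s ≠ 0 := mul_ne_zero heta hs0
        simp only [Prod.mk_eq_zero] at h0
        exact h9 h0.2.1
      · show -(f * s * (f * s) ^ q) + eta * s * (g * s) ^ q + g * s * (eta * s) ^ q = 0
        simp only [mul_pow]
        linear_combination (s * s ^ q) * hcond
      · exact hpt
      · intro hI
        have h9 : -(h * h ^ q) + 0 * c0v ^ q + c0v * 0 ^ q = 0 := hI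
        rw [zero_pow hq0] at h9
        have h10 : h * h ^ q = 0 := by linear_combination -h9
        rcases mul_eq_zero.mp h10 with hh | hh
        · exact hh0 hh
        · exact hh0 (pow_eq_zero_iff hq0 |>.mp hh)
      · show -(h * 0 ^ q) + 0 * 1 ^ q + c0v * 0 ^ q = 0
        simp [zero_pow hq0]
      · show -(h * (f * s) ^ q) + 0 * (g * s) ^ q + c0v * (eta * s) ^ q = 0
        rw [hc0def]
        simp only [mul_pow, zero_mul, add_zero]
        field_simp
        ring
      · rw [hvN2]
        have hWs : ((h, (0:F), c0v) : F × F × F) + (f * s, eta * s, g * s)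
            = (h + f * s, eta * s, c0v + g * s) := by simp
        rw [hWs]
        refine lineN_eq_detLine F q eta ((0:F),(0:F),(1:F)) (h + f * s, eta * s, c0v + g * s)
          s hs0 ?_
        intro v
        show v.1 * 0 * (c0v + g * s) - v.1 * (eta * s) * 1 - 0 * v.2.1 * (c0v + g * s)
          + 0 * (eta * s) * v.2.2 + (h + f * s) * v.2.1 * 1 - (h + f * s) * 0 * v.2.2
          = s * (v.2.1 - eta * v.1)
        have hhs : h + f * s = s := by
          rw [hsdef]; field_simp; ring
        rw [hhs]; ring
      · rw [hline]
        have hWs2 : ((h, (0:F), c0v) : F × F × F) + mu • ((0:F), (0:F), (1:F))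
            = (h, 0, c0v + mu) := by simp
        rw [hWs2]
        have hD : (c0v + mu) * eta ^ q = h * f ^ q + mu * eta ^ q := by
          rw [hc0def]; field_simp
        exact (detLine_eq_eqnLine F q (f * s, eta * s, g * s) (h, 0, c0v + mu)
          _ _ _ (eta ^ q) (eta * s) hetaq (mul_ne_zero heta hs0)
          (key2 F q eta f g s h mu (c0v + mu) hD hE hcond)).symm

end UnitaryGraphPaper
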